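/- Let U and A be n×n matrices over a commutative ring K with A alternating. Then there exists an alternating n×n matrix B′ over K satisfying the matrix equation adj(U)·A = B′·Uᵀ. -/

import Mathlib

open Matrix

section Aux
variable {K : Type*} [CommRing K] {n : ℕ}

private lemma det_swap_rows' (M : Matrix (Fin n) (Fin n) K) {k l : Fin n} (hkl : k ≠ l)
    (x y : Fin n → K) :
    det ((M.updateRow k x).updateRow l y) = - det ((M.updateRow k y).updateRow l x) := by
  have h : (M.updateRow k x).updateRow l y =
      ((M.updateRow k y).updateRow l x).submatrix (Equiv.swap k l) id := by
    ext i j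
    rcases eq_or_ne i k with rfl | hik
    · simp [Equiv.swap_apply_left, updateRow_apply, hkl, hkl.symm]
    rcases eq_or_ne i l with rfl | hil
    · simp [Equiv.swap_apply_right, updateRow_apply, hkl, hkl.symm]
    · simp [Equiv.swap_apply_of_ne_of_ne hik hil, updateRow_apply, hik, hil]
  rw [h, det_permute, Equiv.Perm.sign_swap hkl]
  simp

private lemma det_updateRow_lin (M : Matrix (Fin n) (Fin n) K) (l : Fin n) (s : Finset (Fin n))
    (c : Fin n → K) (v : Fin n → Fin n → K) :
    det (M.updateRow l (∑ m ∈ s, c m • v m)) = ∑ m ∈ s, c m * det (M.updateRow l (v m)) := by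
  classical
  induction s using Finset.induction_on with
  | empty =>
      rw [Finset.sum_empty, Finset.sum_empty, show (0 : Fin n → K) = (0 : K) • 0 by simp,
        det_updateRow_smul, zero_mul]
  | insert _ _ hk ih =>
      rw [Finset.sum_insert hk, Finset.sum_insert hk, det_updateRow_add, det_updateRow_smul, ih]

end Aux

/-- Let `U` and `A` be `n × n` matrices over a commutative ring `K` with `A`
alternating.  Then there exists an alternating `n × n` matrix `B'` over `K` satisfying
`adjugate U * A = B' * Uᵀ`. -/
theorem statement2 (K : Type*) [CommRing K] (n : ℕ)
    (U A : Matrix (Fin n) (Fin n) K)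
    (hAalt : Aᵀ = -A ∧ ∀ i, A i i = 0) :
    ∃ B' : Matrix (Fin n) (Fin n) K,
      (B'ᵀ = -B' ∧ ∀ i, B' i i = 0) ∧
      U.adjugate * A = B' * Uᵀ := by
  classical
  obtain ⟨hA1, hA2⟩ := hAalt
  have hskew : ∀ k l : Fin n, A l k = - A k l := fun k l => by
    simpa using congrFun (congrFun hA1 k) l
  set e : Fin n → Fin n → K := fun i => Pi.single i 1 with he
  refine ⟨Matrix.of fun i m => ∑ k, ∑ l, if k < l then
      A k l * det ((U.updateRow k (e i)).updateRow l (e m)) else 0, ⟨?_, ?_⟩, ?_⟩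
  · -- transpose = neg
    ext i m
    simp only [transpose_apply, of_apply, Matrix.neg_apply, ← Finset.sum_neg_distrib]
    refine Finset.sum_congr rfl fun k _ => Finset.sum_congr rfl fun l _ => ?_
    split
    · next hkl =>
        rw [det_swap_rows' U hkl.ne]; ring
    · rw [neg_zero]
  · -- zero diagonal
    intro i
    simp only [of_apply]
    refine Finset.sum_eq_zero fun k _ => Finset.sum_eq_zero fun l _ => ?_
    split
    · next hkl =>
        rw [det_zero_of_row_eq hkl.ne (by simp [updateRow_apply, hkl.ne]), mul_zero]
    · rfl
  · -- main identity
    ext i j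
    rw [mul_apply, mul_apply]
    have hrow : ∀ m, (Matrix.of fun i m => ∑ k, ∑ l, if k < l then
        A k l * det ((U.updateRow k (e i)).updateRow l (e m)) else 0) i m * Uᵀ m j
        = ∑ k, ∑ l, if k < l then
          A k l * (U j m * det ((U.updateRow k (e i)).updateRow l (e m))) else 0 := by
      intro m
      rw [of_apply, transpose_apply, Finset.sum_mul]
      refine Finset.sum_congr rfl fun k _ => ?_
      rw [Finset.sum_mul]
      refine Finset.sum_congr rfl fun l _ => ?_
      split
      · ring
      · rw [zero_mul]
    rw [Finset.sum_congr rfl fun m _ => hrow m, Finset.sum_comm]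
    have hinner : ∀ k, ∑ m, ∑ l, (if k < l then
        A k l * (U j m * det ((U.updateRow k (e i)).updateRow l (e m))) else 0)
        = ∑ l, if k < l then
          A k l * det ((U.updateRow k (e i)).updateRow l (U j)) else 0 := by
      intro k
      rw [Finset.sum_comm]
      refine Finset.sum_congr rfl fun l _ => ?_
      by_cases hkl : k < l
      · simp only [if_pos hkl]
        rw [← Finset.mul_sum]
        congr 1
        have hUj : U j = ∑ m, U j m • e m := by
          ext x
          simp [he, Pi.single_apply, Finset.sum_ite_eq' Finset.univ x, mul_comm]
        rw [hUj, det_updateRow_lin]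
        refine Finset.sum_congr rfl fun m _ => ?_
        rw [← hUj]
      · simp only [if_neg hkl]
        exact Finset.sum_const_zero
    rw [Finset.sum_congr rfl fun k _ => hinner k]
    -- now evaluate the determinant by cases on j
    have hdet : ∀ k l : Fin n, k < l →
        det ((U.updateRow k (e i)).updateRow l (U j)) =
          (if l = j then adjugate U i k else 0) + (if k = j then - adjugate U i l else 0) := by
      intro k l hkl
      rcases eq_or_ne l j with rfl | hlj
      · have : (U.updateRow k (e i)).updateRow l (U l) = U.updateRow k (e i) := by
          conv_lhs => rw [show U l = (U.updateRow k (e i)) l by simp [updateRow_apply, hkl.ne']]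
          rw [updateRow_eq_self]
        rw [this, if_pos rfl, if_neg hkl.ne, add_zero, adjugate_apply]
      rcases eq_or_ne k j with rfl | hkj
      · rw [det_swap_rows' U hkl.ne, if_neg hlj, if_pos rfl, zero_add, updateRow_eq_self,
          adjugate_apply]
      · rw [if_neg hlj, if_neg hkj, add_zero]
        have hjl : j ≠ l := fun h => hlj h.symm
        have hjk : j ≠ k := fun h => hkj h.symm
        refine det_zero_of_row_eq hjl ?_
        simp [updateRow_apply, hjl, hjk]
    have step : ∀ k, ∑ l, (if k < l then
        A k l * det ((U.updateRow k (e i)).updateRow l (U j)) else 0)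
        = (if k < j then adjugate U i k * A k j else 0)
          + (if k = j then ∑ l, (if j < l then adjugate U i l * A l j else 0) else 0) := by
      intro k
      rcases eq_or_ne k j with hkj | hkj
      · rw [if_neg (hkj ▸ lt_irrefl k), if_pos hkj, zero_add]
        refine Finset.sum_congr rfl fun l _ => ?_
        rcases lt_or_ge j l with h | h
        · rw [if_pos (hkj ▸ h), if_pos h, hdet k l (hkj ▸ h), if_neg (hkj ▸ h.ne'), if_pos hkj,
            zero_add, hkj, hskew l j]
          ring
        · rw [if_neg (hkj ▸ not_lt.mpr h), if_neg (not_lt.mpr h)]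
      · rw [if_neg hkj, add_zero]
        have : ∀ l, (if k < l then
            A k l * det ((U.updateRow k (e i)).updateRow l (U j)) else 0)
            = if l = j then (if k < j then adjugate U i k * A k j else 0) else 0 := by
          intro l
          rcases eq_or_ne l j with rfl | hlj
          · rw [if_pos rfl]
            rcases lt_or_ge k l with h | h
            · rw [if_pos h, if_pos h, hdet k l h, if_pos rfl, if_neg hkj, add_zero]
              ring
            · rw [if_neg (not_lt.mpr h), if_neg (not_lt.mpr h)]
          · rw [if_neg hlj]
            split
            · next h =>
                rw [hdet k l h, if_neg hlj, if_neg hkj, add_zero, mul_zero]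
            · rfl
        rw [Finset.sum_congr rfl fun l _ => this l, Finset.sum_ite_eq' Finset.univ j,
          if_pos (Finset.mem_univ j)]
    rw [Finset.sum_congr rfl fun k _ => step k, Finset.sum_add_distrib,
      Finset.sum_ite_eq' Finset.univ j, if_pos (Finset.mem_univ j)]
    rw [show ∑ k, (if k < j then adjugate U i k * A k j else 0) +
        ∑ l, (if j < l then adjugate U i l * A l j else 0)
        = ∑ m, ((if m < j then adjugate U i m * A m j else 0)
          + (if j < m then adjugate U i m * A m j else 0)) from
      (Finset.sum_add_distrib).symm]
    refine Finset.sum_congr rfl fun m _ => ?_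
    rcases lt_trichotomy m j with h | rfl | h
    · rw [if_pos h, if_neg (asymm h), add_zero]
    · simp [hA2]
    · rw [if_neg (asymm h), if_pos h, zero_add]
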